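/- The following are equivalent: (1) c-BI: for every c-bar P ⊆ ℕ* and every subset Q ⊆ ℕ* that contains P and is inductive (i.e., if Q(a⌢⟨n⟩) for all n then Q(a)), Q(⟨⟩) holds; (2) for every c-bar P ⊆ ℕ*, the root ⟨⟩ is covered by P in formal Baire space, i.e., ⟨⟩ ◁ P. -/
import Mathlib


/-- Initial segment of `α` of length `n`. -/
def seg (α : ℕ → ℕ) (n : ℕ) : List ℕ := List.ofFn (fun i : Fin n => α i)

/-- `a` followed by the constant zero sequence. -/
def zext (a : List ℕ) : ℕ → ℕ := fun i => a.getD i 0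

/-- Upward closure under extension. -/
def extU (U : Set (List ℕ)) : Set (List ℕ) := {a | ∃ b ∈ U, b <+: a}

/-- The cover of formal Baire space, generated by η, ζ, ϝ. -/
inductive Cover : List ℕ → Set (List ℕ) → Prop
  | eta {a : List ℕ} {U : Set (List ℕ)} : a ∈ U → Cover a U
  | zeta {a : List ℕ} {U : Set (List ℕ)} (k : ℕ) : Cover a U → Cover (a ++ [k]) U
  | digamma {a : List ℕ} {U : Set (List ℕ)} : (∀ n, Cover (a ++ [n]) U) → Cover a U

/-- A spread: a decidable tree where every node has a child. -/
def IsSpread (T : Set (List ℕ)) : Prop :=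
  (∀ a, a ∈ T ∨ a ∉ T) ∧ (∀ a b : List ℕ, a <+: b → b ∈ T → a ∈ T) ∧
  (∀ a ∈ T, ∃ n, a ++ [n] ∈ T)

/-- A fan: a finitely branching spread. -/
def IsFan (T : Set (List ℕ)) : Prop :=
  IsSpread T ∧ ∀ a ∈ T, ∃ N, ∀ n, a ++ [n] ∈ T → n ≤ N

/-- `α` is a path in the tree `T`. -/
def IsPath (T : Set (List ℕ)) (α : ℕ → ℕ) : Prop := ∀ n, seg α n ∈ T

/-- A c-bar: a c-set barring every sequence. -/
def IsCBar (P : Set (List ℕ)) : Prop :=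
  (∃ δ : List ℕ → ℕ, ∀ a, a ∈ P ↔ ∀ b, δ a = δ (a ++ b)) ∧
  (∀ α : ℕ → ℕ, ∃ n, seg α n ∈ P)

/-- Pointwise continuity for `F : ℕ^ℕ → ℕ`. -/
def PtwiseCts (F : (ℕ → ℕ) → ℕ) : Prop :=
  ∀ α : ℕ → ℕ, ∃ n, ∀ β : ℕ → ℕ, seg β n = seg α n → F β = F α

/-- An inductive subset of ℕ*. -/
def Inductive (Q : Set (List ℕ)) : Prop := ∀ a, (∀ n, a ++ [n] ∈ Q) → a ∈ Q

/-- Preimage of a subset of ℕ under a relation r ⊆ ℕ* × ℕ. -/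
def rInv (r : List ℕ → ℕ → Prop) (D : Set ℕ) : Set (List ℕ) := {a | ∃ n ∈ D, r a n}

/-- Formal topology map from formal Baire space to formal natural numbers. -/
def IsFTopMap (r : List ℕ → ℕ → Prop) : Prop :=
  Cover [] (rInv r Set.univ) ∧
  ∀ n m : ℕ, ∀ a ∈ extU (rInv r {n}) ∩ extU (rInv r {m}),
    Cover a (rInv r {l | l = n ∧ n = m})

/-- `F` is formally continuous: induced by a formal topology map on points. -/
def FormallyCts (F : (ℕ → ℕ) → ℕ) : Prop :=
  ∃ r : List ℕ → ℕ → Prop, IsFTopMap r ∧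
    ∀ α : ℕ → ℕ, {n | ∃ k, r (seg α k) n} = {F α}

/-- The class of Brouwer-operations. -/
inductive IsBrouwerOp : (List ℕ → ℕ) → Prop
  | const (n : ℕ) : IsBrouwerOp (fun _ => n + 1)
  | sup {γ : List ℕ → ℕ} : γ [] = 0 →
      (∀ n, IsBrouwerOp (fun a => γ (n :: a))) → IsBrouwerOp γ

/-- `bar γ`: minimal sequences on which `γ` is positive. -/
def barOf (γ : List ℕ → ℕ) : Set (List ℕ) :=
  {a | 0 < γ a ∧ ∀ b : List ℕ, b <+: a → b ≠ a → γ b = 0}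

/-- The set presentation `Cov` of formal Baire space. -/
inductive Cov : List ℕ → Set (List ℕ) → Prop
  | single (a : List ℕ) : Cov a {a}
  | union {a : List ℕ} {U : ℕ → Set (List ℕ)} :
      (∀ n, Cov (a ++ [n]) (U n)) → Cov a (⋃ n, U n)

theorem cover_key {P Q : Set (List ℕ)} (hPQ : P ⊆ Q) (hQ : Inductive Q)
    (mono : ∀ a ∈ P, ∀ b, a ++ b ∈ P) :
    ∀ a, Cover a P → ∀ b, a ++ b ∈ Q := by
  intro a hc
  induction hc with
  | eta ha => intro b; exact hPQ (mono _ ha b)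
  | zeta k _ ih => intro b; rw [List.append_assoc]; exact ih hPQ mono _
  | digamma _ ih =>
    intro b
    cases b with
    | nil => exact hQ _ (fun n => by simpa using ih n hPQ mono [])
    | cons n b' =>
      have := ih n hPQ mono b'
      rwa [List.append_assoc] at this

theorem cBI_iff_canonical_proof :
    (∀ P : Set (List ℕ), IsCBar P →
      ∀ Q : Set (List ℕ), P ⊆ Q → Inductive Q → [] ∈ Q)
      ↔ (∀ P : Set (List ℕ), IsCBar P → Cover [] P) := by
  constructor
  · intro h P hP
    exact h P hP {a | Cover a P} (fun a ha => Cover.eta ha)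
      (fun a ha => Cover.digamma ha)
  · intro h P hP Q hPQ hQ
    have hcov := h P hP
    obtain ⟨⟨δ, hδ⟩, _⟩ := hP
    have mono : ∀ a ∈ P, ∀ b, a ++ b ∈ P := by
      intro a ha b
      rw [hδ] at ha ⊢
      intro c
      rw [List.append_assoc]
      rw [← ha (b ++ c), ← ha b]
    simpa using cover_key hPQ hQ mono [] hcov []
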